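/- Let h be analytic on 𝔻 with h(0)=0, h'(0)=1, convex of order α for some α ∈ [1/2, 1), i.e., Re(1 + z h''(z)/h'(z)) > α and moreover |1 + z h''(z)/h'(z)| ≤ (1 + (1-2α)|z|)/(1 - |z|) on 𝔻 (subordination bound). Then u(z) = h(z) + (1-|z|²)(1/2)z h'(z) is injective on 𝔻. -/

import Mathlib

open Metric Set Filter Complex
open scoped Topology

noncomputable section

namespace Stmt11Aux

variable {h : ℂ → ℂ}

/-- Second-derivative test at a global maximum. -/
lemma auxA {φ Φ : ℝ → ℝ} {L : ℝ} (hφ : ∀ t, HasDerivAt φ (Φ t) t)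
    (hmax : ∀ t, φ t ≤ φ 0) (hΦ : HasDerivAt Φ L 0) : L ≤ 0 := by
  have hΦ0 : Φ 0 = 0 := by
    have hloc : IsLocalMax φ 0 := Filter.Eventually.of_forall hmax
    exact hloc.hasDerivAt_eq_zero (hφ 0)
  by_contra hL
  push_neg at hL
  have hslope : Tendsto (slope Φ 0) (𝓝[≠] 0) (𝓝 L) :=
    hasDerivAt_iff_tendsto_slope.mp hΦ
  have hslope' : Tendsto (slope Φ 0) (𝓝[>] 0) (𝓝 L) :=
    hslope.mono_left (nhdsWithin_mono _ fun t ht => ne_of_gt ht)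
  have hev : ∀ᶠ t in 𝓝[>] (0:ℝ), 0 < slope Φ 0 t :=
    hslope'.eventually (eventually_gt_nhds hL)
  obtain ⟨ε, hε, hΦpos⟩ : ∃ ε > 0, ∀ t ∈ Ioo (0:ℝ) ε, 0 < Φ t := by
    rw [eventually_nhdsWithin_iff] at hev
    obtain ⟨ε, hε, hball⟩ := Metric.eventually_nhds_iff.mp hev
    refine ⟨ε, hε, fun t ht => ?_⟩
    have h1 : 0 < slope Φ 0 t := by
      refine hball ?_ ht.1
      simp [Real.dist_eq, abs_of_pos ht.1]
      linarith [ht.2, ht.1]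
    have : slope Φ 0 t = Φ t / t := by simp [slope_def_field, hΦ0]
    rw [this] at h1
    exact (div_pos_iff.mp h1).resolve_right (fun hh => absurd ht.1 (not_lt.mpr hh.2.le)) |>.1
  have hmono : StrictMonoOn φ (Icc 0 (ε/2)) := by
    refine strictMonoOn_of_deriv_pos (convex_Icc _ _)
      (fun t _ => ((hφ t).continuousAt).continuousWithinAt) (fun t ht => ?_)
    rw [interior_Icc] at ht
    rw [(hφ t).deriv]
    exact hΦpos t ⟨ht.1, lt_of_lt_of_le ht.2 (by linarith)⟩
  have : φ 0 < φ (ε/2) :=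
    hmono (left_mem_Icc.mpr (by linarith)) (right_mem_Icc.mpr (by linarith)) (by linarith)
  exact absurd (hmax (ε/2)) (not_le.mpr this)

/-- First-derivative test at a right-endpoint maximum. -/
lemma auxB {ψ : ℝ → ℝ} {c : ℝ} (hd : HasDerivAt ψ c 1)
    (hle : ∀ s ∈ Ico (0:ℝ) 1, ψ s ≤ ψ 1) : 0 ≤ c := by
  have hslope : Tendsto (slope ψ 1) (𝓝[<] 1) (𝓝 c) :=
    (hasDerivAt_iff_tendsto_slope.mp hd).mono_left
      (nhdsWithin_mono _ fun t ht => ne_of_lt ht)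
  refine ge_of_tendsto hslope ?_
  filter_upwards [Ioo_mem_nhdsLT_of_mem (by norm_num : (1:ℝ) ∈ Ioc 0 1)] with s hs
  have h1 : ψ s ≤ ψ 1 := hle s ⟨hs.1.le, hs.2⟩
  have h2 : s - 1 < 0 := by linarith [hs.2]
  rw [slope_def_field]
  exact div_nonneg_of_nonpos (by simp; linarith) h2.le


/-- Compose a ℂ-differentiable map with a real-parameter curve. -/
lemma comp_real {F : ℂ → ℂ} {F' w' : ℂ} {w : ℝ → ℂ} {t : ℝ}
    (hF : HasDerivAt F F' (w t)) (hw : HasDerivAt w w' t) :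
    HasDerivAt (fun s => F (w s)) (w' * F') t := by
  have := (hF.hasFDerivAt.restrictScalars ℝ).comp_hasDerivAt t hw
  simpa [mul_comm, Function.comp_def] using this

lemma conj_comp {w : ℝ → ℂ} {w' : ℂ} {t : ℝ} (hw : HasDerivAt w w' t) :
    HasDerivAt (fun s => (starRingEnd ℂ) (w s)) ((starRingEnd ℂ) w') t := by
  have := Complex.conjCLE.toContinuousLinearMap.hasFDerivAt.comp_hasDerivAt t hw
  simpa [Function.comp_def] using this

lemma ofReal_comp {w : ℝ → ℝ} {w' : ℝ} {t : ℝ} (hw : HasDerivAt w w' t) :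
    HasDerivAt (fun s => ((w s : ℝ) : ℂ)) ((w' : ℝ) : ℂ) t := by
  have := Complex.ofRealCLM.hasFDerivAt.comp_hasDerivAt t hw
  simpa [Function.comp_def] using this

lemma re_comp {w : ℝ → ℂ} {w' : ℂ} {t : ℝ} (hw : HasDerivAt w w' t) :
    HasDerivAt (fun s => (w s).re) w'.re t := by
  have := Complex.reCLM.hasFDerivAt.comp_hasDerivAt t hw
  simpa [Function.comp_def] using this

/-- The derivative of an injective-type holomorphic map with the stated bound never vanishes. -/
lemma deriv_ne_zero {α : ℝ} (hα1 : 1/2 ≤ α) {h : ℂ → ℂ}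
    (hd : DifferentiableOn ℂ h (Metric.ball 0 1))
    (h1 : deriv h 0 = 1)
    (hbound : ∀ z ∈ Metric.ball (0 : ℂ) 1,
      ‖1 + z * deriv (deriv h) z / deriv h z‖ ≤ (1 + (1 - 2*α)*‖z‖) / (1 - ‖z‖)) :
    ∀ z₀ ∈ Metric.ball (0:ℂ) 1, deriv h z₀ ≠ 0 := by
  intro z₀ hz₀ hzero
  have hA : AnalyticOnNhd ℂ h (ball 0 1) := hd.analyticOnNhd isOpen_ball
  have hA' : AnalyticOnNhd ℂ (deriv h) (ball 0 1) := hA.deriv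
  have hz₀mem : ‖z₀‖ < 1 := mem_ball_zero_iff.mp hz₀
  have hz₀0 : z₀ ≠ 0 := by
    rintro rfl
    rw [h1] at hzero; exact one_ne_zero hzero
  have hne : ¬ (∀ᶠ z in 𝓝 z₀, deriv h z = 0) := by
    intro hev
    have := hA'.eqOn_zero_of_preconnected_of_eventuallyEq_zero
      (convex_ball (0:ℂ) 1).isPreconnected hz₀ hev (mem_ball_self one_pos)
    rw [h1] at this
    exact one_ne_zero this
  have hAz : AnalyticAt ℂ (deriv h) z₀ := hA' z₀ hz₀
  have horder : analyticOrderAt (deriv h) z₀ ≠ ⊤ := by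
    simp only [ne_eq, analyticOrderAt_eq_top]; exact hne
  obtain ⟨n, hn⟩ := ENat.ne_top_iff_exists.mp horder
  obtain ⟨g, hg, hgne, hev⟩ := (hAz.analyticOrderAt_eq_natCast).mp hn.symm
  have hn0 : n ≠ 0 := by
    rintro rfl
    apply hgne
    have := hev.self_of_nhds
    simpa [hzero] using this.symm
  -- bound for the logarithmic derivative of g near z₀
  obtain ⟨V, hV1, hV2, hV3⟩ : ∃ V, (∀ y ∈ V, AnalyticAt ℂ g y) ∧ IsOpen V ∧ z₀ ∈ V := by
    obtain ⟨V, a, b, c⟩ := _root_.eventually_nhds_iff.mp hg.eventually_analyticAt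
    exact ⟨V, a, b, c⟩
  have hgV : AnalyticOnNhd ℂ g V := fun y hy => hV1 y hy
  have hgA : ContinuousAt (fun z => z * deriv g z / g z) z₀ := by
    refine ContinuousAt.div ?_ hg.continuousAt hgne
    exact (continuousAt_id.mul ((hgV.deriv z₀ hV3).continuousAt))
  set q : ℂ → ℂ := fun z => z * deriv g z / g z with hq
  set C : ℝ := ‖q z₀‖ + 1 with hC
  set R : ℝ := (1 + ‖z₀‖)/2 with hR
  have hR1 : R < 1 := by rw [hR]; linarith
  have hRz : ‖z₀‖ < R := by rw [hR]; linarith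
  have hRpos : (0:ℝ) < 1 - R := by linarith
  -- the curve t ↦ z₀ * (1 + t)
  set m : ℝ → ℂ := fun t => z₀ * (1 + (t:ℂ)) with hm
  have hmt : Tendsto m (𝓝[>] (0:ℝ)) (𝓝 z₀) := by
    have : Tendsto m (𝓝 (0:ℝ)) (𝓝 z₀) := by
      have hc : Continuous m := by continuity
      have h0 : m 0 = z₀ := by simp [hm]
      simpa [h0] using hc.tendsto 0
    exact this.mono_left nhdsWithin_le_nhds
  -- the eventual equality on an open set
  obtain ⟨U, hUmem, hUopen, hUeq⟩ : ∃ U, z₀ ∈ U ∧ IsOpen U ∧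
      ∀ z ∈ U, deriv h z = (z - z₀)^n * g z := by
    obtain ⟨U, hU1, hU2, hU3⟩ := _root_.eventually_nhds_iff.mp hev
    exact ⟨U, hU3, hU2, fun z hz => by simpa [smul_eq_mul] using hU1 z hz⟩
  -- eventual facts along t → 0⁺
  have hqlt : ‖q z₀‖ < C := by rw [hC]; linarith
  set K : ℝ := C + 1/(1-R) + 1 with hK
  have hCpos : 0 < C := by rw [hC]; positivity
  have hKpos : 0 < K := by rw [hK]; positivity
  have E1 : ∀ᶠ t in 𝓝[>] (0:ℝ), m t ∈ U := hmt.eventually (hUopen.mem_nhds hUmem)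
  have E2 : ∀ᶠ t in 𝓝[>] (0:ℝ), m t ∈ V := hmt.eventually (hV2.mem_nhds hV3)
  have E3 : ∀ᶠ t in 𝓝[>] (0:ℝ), g (m t) ≠ 0 :=
    hmt.eventually (hg.continuousAt.eventually_ne hgne)
  have E4 : ∀ᶠ t in 𝓝[>] (0:ℝ), ‖q (m t)‖ ≤ C := by
    have : ∀ᶠ z in 𝓝 z₀, ‖q z‖ ≤ C := by
      have := hgA.norm.eventually (eventually_le_nhds hqlt)
      exact this
    exact hmt.eventually this
  have E5 : ∀ᶠ t in 𝓝[>] (0:ℝ), ‖m t‖ < R := by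
    have : ∀ᶠ z in 𝓝 z₀, ‖z‖ < R := by
      have hcont : ContinuousAt (fun z : ℂ => ‖z‖) z₀ := continuous_norm.continuousAt
      exact hcont.eventually (eventually_lt_nhds hRz)
    exact hmt.eventually this
  have E6 : ∀ᶠ t in 𝓝[>] (0:ℝ), 0 < t := self_mem_nhdsWithin
  have E7 : ∀ᶠ t in 𝓝[>] (0:ℝ), t < n / K := by
    have hnK : 0 < (n:ℝ) / K := by
      apply div_pos _ hKpos
      exact_mod_cast Nat.pos_of_ne_zero hn0
    exact (eventually_lt_nhds hnK).filter_mono nhdsWithin_le_nhds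
  obtain ⟨t, hU', hV', hgz0, hqC, hmR, ht0, htK⟩ :=
    (E1.and (E2.and (E3.and (E4.and (E5.and (E6.and E7)))))).exists
  -- now derive the contradiction at z := m t
  set z : ℂ := m t with hz
  have htC : (t:ℂ) ≠ 0 := by exact_mod_cast ht0.ne'
  have hdz : z - z₀ = z₀ * (t:ℂ) := by rw [hz, hm]; ring
  have hdz0 : z - z₀ ≠ 0 := by rw [hdz]; exact mul_ne_zero hz₀0 htC
  obtain ⟨k, rfl⟩ : ∃ k, n = k + 1 := ⟨n - 1, (Nat.succ_pred_eq_of_pos (Nat.pos_of_ne_zero hn0)).symm⟩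
  have hder : deriv h z = (z - z₀)^(k+1) * g z := hUeq z hU'
  have hderne : deriv h z ≠ 0 := by
    rw [hder]; exact mul_ne_zero (pow_ne_zero _ hdz0) hgz0
  have hgdiff : DifferentiableAt ℂ g z := (hV1 z hV').differentiableAt
  have hev2 : deriv h =ᶠ[𝓝 z] (fun y => (y - z₀)^(k+1) * g y) :=
    Filter.eventually_of_mem (hUopen.mem_nhds hU') (fun y hy => hUeq y hy)
  have hder2 : deriv (deriv h) z
      = (↑(k+1) * (z - z₀)^k * 1) * g z + (z - z₀)^(k+1) * deriv g z := by
    rw [hev2.deriv_eq]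
    have h1 : HasDerivAt (fun y : ℂ => (y - z₀)^(k+1)) (↑(k+1) * (z - z₀)^k * 1) z :=
      ((hasDerivAt_id z).sub_const z₀).pow (k+1)
    exact (h1.mul hgdiff.hasDerivAt).deriv
  -- key algebraic identity
  have hkey : (1:ℂ) + z * deriv (deriv h) z / deriv h z
      = (((1 + (k+1) * (1+t)/t : ℝ)) : ℂ) + q z := by
    rw [hder, hder2, hq]
    have hzz : z = z₀ * (1 + (t:ℂ)) := rfl
    rw [hdz, hzz]
    have hpow : (z₀ * (t:ℂ))^(k+1) = (z₀*(t:ℂ))^k * (z₀ * t) := pow_succ _ _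
    rw [hpow]
    have hgz0' : g (z₀ * (1 + (t:ℂ))) ≠ 0 := hgz0
    have hpk : (z₀*(t:ℂ))^k ≠ 0 := pow_ne_zero _ (mul_ne_zero hz₀0 htC)
    push_cast
    field_simp
    ring
  -- norm lower bound
  have hreal : (0:ℝ) < 1 + (k+1) * (1+t)/t := by positivity
  have hlow : ((k+1:ℝ))/t - C ≤ ‖(1:ℂ) + z * deriv (deriv h) z / deriv h z‖ := by
    rw [hkey]
    have h1 : ‖(((1 + (k+1) * (1+t)/t : ℝ)) : ℂ)‖ = 1 + (k+1) * (1+t)/t := by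
      rw [Complex.norm_real, Real.norm_eq_abs, abs_of_pos hreal]
    have htri : ‖(((1 + (k+1) * (1+t)/t : ℝ)) : ℂ)‖ - ‖q z‖
        ≤ ‖(((1 + (k+1) * (1+t)/t : ℝ)) : ℂ) + q z‖ := by
      have := norm_add_le ((((1 + (k+1) * (1+t)/t : ℝ)) : ℂ) + q z) (-(q z))
      rw [add_neg_cancel_right, norm_neg] at this
      linarith [this]
    have h2 : ((k+1:ℝ))/t ≤ 1 + (k+1) * (1+t)/t := by
      have : (k+1:ℝ) * (1+t)/t = (k+1)/t + (k+1) := by field_simp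
      rw [this]
      have : (0:ℝ) ≤ (k+1:ℝ) := by positivity
      linarith
    rw [h1] at htri
    linarith [htri, hqC]
  -- norm upper bound from hbound
  have hmball : z ∈ ball (0:ℂ) 1 := by
    rw [mem_ball_zero_iff]; exact lt_trans hmR hR1
  have hup : ‖(1:ℂ) + z * deriv (deriv h) z / deriv h z‖ ≤ 1/(1-R) := by
    refine le_trans (hbound z hmball) ?_
    have hnum : 1 + (1 - 2*α)*‖z‖ ≤ 1 := by nlinarith [norm_nonneg z]
    have hden : 1 - R ≤ 1 - ‖z‖ := by linarith [hmR]
    exact div_le_div₀ (by norm_num) hnum hRpos hden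
  -- contradiction
  have hfrac : K < ((k+1:ℝ))/t := by
    rw [lt_div_iff₀ ht0]
    calc K * t < K * ((k+1:ℕ) / K) := by
          apply mul_lt_mul_of_pos_left _ hKpos
          exact_mod_cast htK
      _ = (k+1:ℕ) := by field_simp
      _ = ((k+1:ℝ)) := by push_cast; ring
  have : ((k+1:ℝ))/t ≤ C + 1/(1-R) := by
    have := le_trans hlow hup
    linarith
  rw [hK] at hfrac
  linarith




lemma hasStrictDeriv (hd : DifferentiableOn ℂ h (Metric.ball 0 1)) {z : ℂ}
    (hz : z ∈ Metric.ball (0:ℂ) 1) : HasStrictDerivAt h (deriv h z) z := by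
  obtain ⟨p, hp⟩ := (hd.analyticOnNhd isOpen_ball) z hz
  have h1 := hp.hasStrictDerivAt
  rwa [← hp.deriv] at h1

lemma isOpen_image_of (hd : DifferentiableOn ℂ h (Metric.ball 0 1))
    (hne : ∀ z ∈ Metric.ball (0:ℂ) 1, deriv h z ≠ 0)
    {s : Set ℂ} (hsub : s ⊆ Metric.ball 0 1) (hsO : IsOpen s) : IsOpen (h '' s) := by
  rw [isOpen_iff_mem_nhds]
  rintro w ⟨z, hzs, rfl⟩
  have hst := hasStrictDeriv hd (hsub hzs)
  have hmap := hst.map_nhds_eq (hne z (hsub hzs))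
  rw [← hmap]
  exact Filter.image_mem_map (hsO.mem_nhds hzs)

lemma g_left (hinj : Set.InjOn h (Metric.ball 0 1)) {z : ℂ} (hz : z ∈ Metric.ball (0:ℂ) 1) :
    Function.invFunOn h (Metric.ball 0 1) (h z) = z :=
  hinj.leftInvOn_invFunOn hz

lemma g_right {w : ℂ} (hw : w ∈ h '' Metric.ball 0 1) :
    h (Function.invFunOn h (Metric.ball 0 1) w) = w := by
  obtain ⟨z, hz, rfl⟩ := hw
  exact Function.invFunOn_eq ⟨z, hz, rfl⟩

lemma g_mem {w : ℂ} (hw : w ∈ h '' Metric.ball 0 1) :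
    Function.invFunOn h (Metric.ball 0 1) w ∈ Metric.ball (0:ℂ) 1 := by
  obtain ⟨z, hz, rfl⟩ := hw
  exact Function.invFunOn_mem ⟨z, hz, rfl⟩

lemma g_hasDeriv (hd : DifferentiableOn ℂ h (Metric.ball 0 1))
    (hinj : Set.InjOn h (Metric.ball 0 1))
    (hne : ∀ z ∈ Metric.ball (0:ℂ) 1, deriv h z ≠ 0)
    {z : ℂ} (hz : z ∈ Metric.ball (0:ℂ) 1) :
    HasDerivAt (Function.invFunOn h (Metric.ball 0 1)) (deriv h z)⁻¹ (h z) := by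
  have hev : ∀ᶠ x in 𝓝 z, Function.invFunOn h (Metric.ball 0 1) (h x) = x := by
    filter_upwards [isOpen_ball.mem_nhds hz] with x hx
    exact g_left hinj hx
  exact ((hasStrictDeriv hd hz).to_local_left_inverse (hne z hz) hev).hasDerivAt

lemma g_diffOn (hd : DifferentiableOn ℂ h (Metric.ball 0 1))
    (hinj : Set.InjOn h (Metric.ball 0 1))
    (hne : ∀ z ∈ Metric.ball (0:ℂ) 1, deriv h z ≠ 0) : DifferentiableOn ℂ (Function.invFunOn h (Metric.ball 0 1))
    (h '' Metric.ball 0 1) := by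
  rintro w ⟨z, hz, rfl⟩
  exact ((g_hasDeriv hd hinj hne hz).differentiableAt).differentiableWithinAt

lemma image_ball_convex (hd : DifferentiableOn ℂ h (Metric.ball 0 1))
    (hinj : Set.InjOn h (Metric.ball 0 1))
    (hconv : Convex ℝ (h '' Metric.ball 0 1))
    (hne : ∀ z ∈ Metric.ball (0:ℂ) 1, deriv h z ≠ 0)
    {r : ℝ} (hr0 : 0 < r) (hr1 : r ≤ 1) : Convex ℝ (h '' Metric.ball 0 r) := by
  set g := Function.invFunOn h (Metric.ball 0 1) with hg
  have key : ∀ z₁ ∈ Metric.ball (0:ℂ) r, ∀ z₂ ∈ Metric.ball (0:ℂ) r, ‖z₂‖ ≤ ‖z₁‖ →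
      ∀ a b : ℝ, 0 ≤ a → 0 ≤ b → a + b = 1 → a • h z₁ + b • h z₂ ∈ h '' Metric.ball 0 r := by
    intro z₁ hz₁ z₂ hz₂ hle a b ha hb hab
    by_cases hz10 : z₁ = 0
    · have hz20 : z₂ = 0 := by
        rw [hz10] at hle; simpa using norm_le_zero_iff.mp (by simpa using hle)
      rw [hz10, hz20, ← add_smul, hab, one_smul]
      exact ⟨0, by simpa using hr0, rfl⟩
    · set lam := z₂ / z₁ with hlam
      have hlam1 : ‖lam‖ ≤ 1 := by
        rw [hlam, norm_div]
        exact div_le_one_of_le₀ hle (norm_nonneg _)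
      set F : ℂ → ℂ := fun ζ => a • h ζ + b • h (lam * ζ) with hF
      have hmaps : ∀ ζ ∈ Metric.ball (0:ℂ) 1, F ζ ∈ h '' Metric.ball 0 1 := by
        intro ζ hζ
        have h1 : h ζ ∈ h '' Metric.ball 0 1 := ⟨ζ, hζ, rfl⟩
        have h2 : h (lam * ζ) ∈ h '' Metric.ball 0 1 := by
          refine ⟨lam * ζ, ?_, rfl⟩
          rw [mem_ball_zero_iff] at hζ ⊢
          calc ‖lam * ζ‖ = ‖lam‖ * ‖ζ‖ := norm_mul _ _
            _ ≤ 1 * ‖ζ‖ := by gcongr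
            _ < 1 := by simpa using hζ
        exact hconv h1 h2 ha hb hab
      set φ : ℂ → ℂ := fun ζ => g (F ζ) with hφ
      have hFd : DifferentiableOn ℂ F (Metric.ball 0 1) := by
        refine DifferentiableOn.add (hd.const_smul a) ?_
        refine DifferentiableOn.const_smul ?_ b
        refine DifferentiableOn.comp hd ((differentiable_id.const_mul lam).differentiableOn) ?_
        intro ζ hζ
        rw [mem_ball_zero_iff] at hζ ⊢
        calc ‖lam * ζ‖ = ‖lam‖ * ‖ζ‖ := norm_mul _ _
          _ ≤ 1 * ‖ζ‖ := by gcongr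
          _ < 1 := by simpa using hζ
      have hφd : DifferentiableOn ℂ φ (Metric.ball 0 1) :=
        DifferentiableOn.comp (g_diffOn hd hinj hne) hFd (fun ζ hζ => hmaps ζ hζ)
      have hφmaps : MapsTo φ (Metric.ball 0 1) (Metric.ball 0 1) := by
        intro ζ hζ
        exact g_mem (hmaps ζ hζ)
      have hφ0 : φ 0 = 0 := by
        have hF0 : F 0 = h 0 := by
          show a • h 0 + b • h (lam * 0) = h 0
          rw [mul_zero, ← add_smul, hab, one_smul]
        show g (F 0) = 0
        rw [hF0]
        exact g_left hinj (mem_ball_self one_pos)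
      have hz₁1 : ‖z₁‖ < 1 := by
        have := mem_ball_zero_iff.mp hz₁
        exact lt_of_lt_of_le this hr1
      have hsch := Complex.norm_le_norm_of_mapsTo_ball hφd (hφmaps.mono_right ball_subset_closedBall) hφ0 hz₁1
      have hmem : φ z₁ ∈ Metric.ball (0:ℂ) r := by
        rw [mem_ball_zero_iff]
        exact lt_of_le_of_lt hsch (mem_ball_zero_iff.mp hz₁)
      refine ⟨φ z₁, hmem, ?_⟩
      have hlz : lam * z₁ = z₂ := by
        rw [hlam]; field_simp
      have hFz : F z₁ = a • h z₁ + b • h z₂ := by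
        show a • h z₁ + b • h (lam * z₁) = _
        rw [hlz]
      have hmemΩ : F z₁ ∈ h '' Metric.ball 0 1 := hmaps z₁ (Metric.ball_subset_ball hr1 hz₁)
      exact (g_right hmemΩ).trans hFz
  intro x hx y hy a b ha hb hab
  obtain ⟨z₁, hz₁, rfl⟩ := hx
  obtain ⟨z₂, hz₂, rfl⟩ := hy
  rcases le_total ‖z₂‖ ‖z₁‖ with hc | hc
  · exact key z₁ hz₁ z₂ hz₂ hc a b ha hb hab
  · rw [add_comm]
    exact key z₂ hz₂ z₁ hz₁ hc b a hb ha (by linarith)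


lemma reB_nonneg (hd : DifferentiableOn ℂ h (Metric.ball 0 1))
    (hinj : Set.InjOn h (Metric.ball 0 1))
    (hconv : Convex ℝ (h '' Metric.ball 0 1))
    (hne : ∀ z ∈ Metric.ball (0:ℂ) 1, deriv h z ≠ 0) :
    ∀ z₀ ∈ Metric.ball (0:ℂ) 1, 0 ≤ (1 + z₀ * deriv (deriv h) z₀ / deriv h z₀).re := by
  intro z₀ hz₀
  by_cases hz00 : z₀ = 0
  · subst hz00; simp
  · set r : ℝ := ‖z₀‖ with hrdef
    have hr0 : 0 < r := norm_pos_iff.mpr hz00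
    have hr1 : r < 1 := mem_ball_zero_iff.mp hz₀
    set K : Set ℂ := h '' Metric.ball 0 r with hK
    have hKconv : Convex ℝ K := image_ball_convex hd hinj hconv hne hr0 hr1.le
    have hKopen : IsOpen K :=
      isOpen_image_of hd hne (ball_subset_ball hr1.le) isOpen_ball
    have hw₀ : h z₀ ∉ K := by
      rintro ⟨z', hz', heq⟩
      have hz'1 : z' ∈ Metric.ball (0:ℂ) 1 := ball_subset_ball hr1.le hz'
      have := hinj hz'1 hz₀ heq
      rw [this] at hz'
      exact lt_irrefl r (by simpa [hrdef] using mem_ball_zero_iff.mp hz')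
    obtain ⟨f, hf⟩ := geometric_hahn_banach_open_point hKconv hKopen hw₀
    have hclos : ∀ v ∈ closure K, f v ≤ f (h z₀) := by
      intro v hv
      have hsub : K ⊆ {v : ℂ | f v ≤ f (h z₀)} := fun u hu => (hf u hu).le
      exact closure_minimal hsub (isClosed_le f.continuous continuous_const) hv
    -- the circle of radius r is in the closure of K
    set c : ℝ → ℂ := fun θ => z₀ * Complex.exp ((θ:ℂ) * I) with hcdef
    have hnormc : ∀ θ : ℝ, ‖c θ‖ = r := by
      intro θ
      rw [hcdef]
      simp only [norm_mul, Complex.norm_exp_ofReal_mul_I, mul_one, hrdef]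
    have hcball : ∀ θ : ℝ, c θ ∈ Metric.ball (0:ℂ) 1 := by
      intro θ; rw [mem_ball_zero_iff, hnormc]; exact hr1
    have hcirc : ∀ θ : ℝ, h (c θ) ∈ closure K := by
      intro θ
      have htd : Tendsto (fun s : ℝ => h ((s:ℂ) * c θ)) (𝓝[<] (1:ℝ)) (𝓝 (h (c θ))) := by
        have h1 : ContinuousAt h (((1:ℝ):ℂ) * c θ) := by
          rw [Complex.ofReal_one, one_mul]
          exact (hd.differentiableAt (isOpen_ball.mem_nhds (hcball θ))).continuousAt
        have h2 : ContinuousAt (fun s : ℝ => (s:ℂ) * c θ) 1 :=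
          (Complex.continuous_ofReal.continuousAt).mul continuousAt_const
        have h2' : Tendsto (fun s : ℝ => (s:ℂ) * c θ) (𝓝 1) (𝓝 (c θ)) := by
          have := h2.tendsto
          simpa using this
        have h1' : Tendsto h (𝓝 (c θ)) (𝓝 (h (c θ))) := by
          rw [Complex.ofReal_one, one_mul] at h1
          exact h1.tendsto
        exact (h1'.comp h2').mono_left nhdsWithin_le_nhds
      refine mem_closure_of_tendsto htd ?_
      filter_upwards [Ioo_mem_nhdsLT_of_mem (by norm_num : (1:ℝ) ∈ Ioc 0 1)] with s hs
      refine ⟨(s:ℂ) * c θ, ?_, rfl⟩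
      rw [mem_ball_zero_iff, norm_mul, hnormc, Complex.norm_real, Real.norm_eq_abs,
        abs_of_pos hs.1]
      nlinarith [hs.2, hr0]
    -- derivative of the circle curve
    have hcd : ∀ θ : ℝ, HasDerivAt c (z₀ * (Complex.exp ((θ:ℂ)*I) * I)) θ := by
      intro θ
      have h1 : HasDerivAt (fun θ:ℝ => ((θ:ℝ):ℂ)) 1 θ := by
        simpa using ofReal_comp (hasDerivAt_id θ)
      have h2 : HasDerivAt (fun θ:ℝ => (θ:ℂ) * I) (1 * I) θ := h1.mul_const I
      have h3 : HasDerivAt (fun θ:ℝ => Complex.exp ((θ:ℂ) * I))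
          ((1*I) * Complex.exp ((θ:ℂ)*I)) θ := comp_real (Complex.hasDerivAt_exp _) h2
      have h4 := h3.const_mul z₀
      convert h4 using 1
      rfl
      ring
    set d := deriv h z₀ with hddef
    set dd := deriv (deriv h) z₀ with hdddef
    have hdne : d ≠ 0 := hne z₀ hz₀
    -- φ and its first derivative
    set φ : ℝ → ℝ := fun θ => f (h (c θ)) with hφdef
    set Φ : ℝ → ℝ := fun θ =>
      f ((z₀ * (Complex.exp ((θ:ℂ)*I) * I)) * deriv h (c θ)) with hΦdef
    have hφd : ∀ θ, HasDerivAt φ (Φ θ) θ := by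
      intro θ
      have hh := comp_real ((hasStrictDeriv hd (hcball θ)).hasDerivAt) (hcd θ)
      exact f.hasFDerivAt.comp_hasDerivAt θ hh
    have hc0 : c 0 = z₀ := by rw [hcdef]; simp
    have hφmax : ∀ θ, φ θ ≤ φ 0 := by
      intro θ
      have := hclos _ (hcirc θ)
      rw [hφdef]
      simpa [hc0] using this
    -- second derivative of φ at 0
    have hA : HasDerivAt (fun θ:ℝ => z₀ * (Complex.exp ((θ:ℂ)*I) * I))
        (-z₀) 0 := by
      have h1 : HasDerivAt (fun θ:ℝ => ((θ:ℝ):ℂ)) 1 0 := by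
        simpa using ofReal_comp (hasDerivAt_id (0:ℝ))
      have h2 : HasDerivAt (fun θ:ℝ => (θ:ℂ) * I) (1 * I) 0 := h1.mul_const I
      have h3 : HasDerivAt (fun θ:ℝ => Complex.exp ((θ:ℂ) * I))
          ((1*I) * Complex.exp (((0:ℝ):ℂ)*I)) 0 := comp_real (Complex.hasDerivAt_exp _) h2
      have h4 := (h3.mul_const I).const_mul z₀
      convert h4 using 1
      rfl
      simp [Complex.ext_iff]
    have hB : HasDerivAt (fun θ:ℝ => deriv h (c θ)) ((z₀ * I) * dd) 0 := by
      have hdh : HasDerivAt (deriv h) dd z₀ := by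
        have := ((hd.analyticOnNhd isOpen_ball).deriv z₀ hz₀).differentiableAt
        exact hdddef ▸ this.hasDerivAt
      have := comp_real (by rw [hc0]; exact hdh : HasDerivAt (deriv h) dd (c 0)) (hcd 0)
      convert this using 1
      simp [Complex.ext_iff]
    have hΦd : HasDerivAt Φ (f ((-z₀) * deriv h (c 0) + (z₀ * (Complex.exp (((0:ℝ):ℂ)*I) * I)) * ((z₀*I)*dd))) 0 := by
      have hprod := hA.mul hB
      exact f.hasFDerivAt.comp_hasDerivAt 0 hprod
    have hL : f ((-z₀) * deriv h (c 0) + (z₀ * (Complex.exp (((0:ℝ):ℂ)*I) * I)) * ((z₀*I)*dd)) ≤ 0 :=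
      auxA hφd hφmax hΦd
    have hL' : f (-(z₀ * d + z₀^2 * dd)) ≤ 0 := by
      have harg : (-z₀) * deriv h (c 0) + (z₀ * (Complex.exp (((0:ℝ):ℂ)*I) * I)) * ((z₀*I)*dd)
          = -(z₀ * d + z₀^2 * dd) := by
        rw [hc0, ← hddef]
        simp only [Complex.ofReal_zero, zero_mul, Complex.exp_zero, one_mul]
        have : (I:ℂ) * I = -1 := Complex.I_mul_I
        calc -z₀ * d + z₀ * I * (z₀ * I * dd) = z₀ * (I * I) * z₀ * dd - z₀ * d := by ring
          _ = -(z₀ * d + z₀ ^ 2 * dd) := by rw [this]; ring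
      rwa [harg] at hL
    have hpos : 0 ≤ f (z₀ * d + z₀^2 * dd) := by
      rw [map_neg] at hL'
      linarith
    -- tangential derivative vanishes
    have hI0 : Φ 0 = 0 := by
      have hmax : IsLocalMax φ 0 := Filter.Eventually.of_forall hφmax
      exact hmax.hasDerivAt_eq_zero (hφd 0)
    have hI0' : f ((z₀ * d) * I) = 0 := by
      have harg : (z₀ * (Complex.exp (((0:ℝ):ℂ)*I) * I)) * deriv h (c 0) = (z₀ * d) * I := by
        rw [hc0, ← hddef]
        simp only [Complex.ofReal_zero, zero_mul, Complex.exp_zero, one_mul]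
        ring
      have hI0b : f ((z₀ * (Complex.exp (((0:ℝ):ℂ)*I) * I)) * deriv h (c 0)) = 0 := hI0
      rwa [harg] at hI0b
    -- radial derivative is nonnegative
    have hrad : 0 ≤ f (z₀ * d) := by
      set ψ : ℝ → ℝ := fun s => f (h ((s:ℂ) * z₀)) with hψdef
      have hmem1 : ((1:ℝ):ℂ) * z₀ ∈ Metric.ball (0:ℂ) 1 := by
        rw [Complex.ofReal_one, one_mul]; exact hz₀
      have hone : HasDerivAt (fun s:ℝ => ((s:ℝ):ℂ)) 1 1 := by
        simpa using ofReal_comp (hasDerivAt_id (1:ℝ))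
      have hinner : HasDerivAt (fun s:ℝ => (s:ℂ) * z₀) (1 * z₀) 1 := hone.mul_const z₀
      have hψd : HasDerivAt ψ (f ((1 * z₀) * deriv h (((1:ℝ):ℂ) * z₀))) 1 :=
        f.hasFDerivAt.comp_hasDerivAt 1
          (comp_real ((hasStrictDeriv hd hmem1).hasDerivAt) hinner)
      have hψle : ∀ s ∈ Ico (0:ℝ) 1, ψ s ≤ ψ 1 := by
        intro s hs
        have hsK : h ((s:ℂ) * z₀) ∈ K := by
          refine ⟨(s:ℂ) * z₀, ?_, rfl⟩
          rw [mem_ball_zero_iff, norm_mul, Complex.norm_real, Real.norm_eq_abs,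
            _root_.abs_of_nonneg hs.1, ← hrdef]
          nlinarith [hs.2, hr0]
        have h1 : ψ 1 = f (h z₀) := by
          rw [hψdef]; norm_num
        rw [h1, hψdef]
        exact (hf _ hsK).le
      have hfin := auxB hψd hψle
      simp only [Complex.ofReal_one, one_mul] at hfin
      rwa [← hddef] at hfin
    -- linear algebra conclusion
    set cc := z₀ * d with hccdef
    have hcc0 : cc ≠ 0 := mul_ne_zero hz00 hdne
    set B := 1 + z₀ * dd / d with hBdef
    have hsplit : z₀ * d + z₀^2 * dd = (B.re : ℂ) * cc + (B.im : ℂ) * (cc * I) := by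
      have h1 : (B.re : ℂ) * cc + (B.im : ℂ) * (cc * I) = cc * B := by
        have : ((B.re : ℂ) + (B.im : ℂ) * I) = B := Complex.re_add_im B
        calc (B.re : ℂ) * cc + (B.im : ℂ) * (cc * I)
            = cc * ((B.re : ℂ) + (B.im : ℂ) * I) := by ring
          _ = cc * B := by rw [this]
      rw [h1, hccdef, hBdef]
      field_simp
    have hfsplit : f (z₀ * d + z₀^2 * dd) = B.re * f cc + B.im * f (cc * I) := by
      rw [hsplit]
      have e1 : (B.re : ℂ) * cc = B.re • cc := (Complex.real_smul).symm
      have e2 : (B.im : ℂ) * (cc * I) = B.im • (cc * I) := (Complex.real_smul).symm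
      rw [e1, e2, map_add, map_smul, map_smul, smul_eq_mul, smul_eq_mul]
    have hfI : f (cc * I) = 0 := hI0'
    have hkey : 0 ≤ B.re * f cc := by
      rw [hfsplit, hfI, mul_zero, add_zero] at hpos
      exact hpos
    have hfcpos : 0 < f cc := by
      rcases lt_or_eq_of_le hrad with hlt | heq
      · exact hlt
      · exfalso
        -- f vanishes identically, contradicting strict separation
        have hzero : ∀ v : ℂ, f v = 0 := by
          intro v
          have hrep : v = ((v/cc).re : ℂ) * cc + ((v/cc).im : ℂ) * (cc * I) := by
            have : ((v/cc).re : ℂ) + ((v/cc).im : ℂ) * I = v / cc := Complex.re_add_im _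
            calc v = (v / cc) * cc := by field_simp
              _ = (((v/cc).re : ℂ) + ((v/cc).im : ℂ) * I) * cc := by rw [this]
              _ = ((v/cc).re : ℂ) * cc + ((v/cc).im : ℂ) * (cc * I) := by ring
          rw [hrep]
          have e1 : ((v/cc).re : ℂ) * cc = (v/cc).re • cc := (Complex.real_smul).symm
          have e2 : ((v/cc).im : ℂ) * (cc * I) = (v/cc).im • (cc * I) := (Complex.real_smul).symm
          rw [e1, e2, map_add, map_smul, map_smul, smul_eq_mul, smul_eq_mul, hfI, ← heq]
          ring
        have h0K : h 0 ∈ K := ⟨0, by simpa using hr0, rfl⟩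
        have := hf _ h0K
        rw [hzero, hzero] at this
        exact lt_irrefl 0 this
    by_contra hneg
    push_neg at hneg
    have : B.re * f cc < 0 := mul_neg_of_neg_of_pos (by rwa [hBdef] at hneg) hfcpos
    linarith


lemma final_ineq {A B T1 T2 : ℝ} (hA : 0 < A) (hB : B < 1) (h1 : -(B*A) ≤ T1)
    (h2 : 0 ≤ T2) : 0 < A + T1 + T2 := by nlinarith


end Stmt11Aux

open Stmt11Aux in
theorem stmt_11 (α : ℝ) (hα1 : 1/2 ≤ α) (hα2 : α < 1) (h : ℂ → ℂ)
    (hd : DifferentiableOn ℂ h (Metric.ball 0 1))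
    (hinj : Set.InjOn h (Metric.ball 0 1))
    (hconv : Convex ℝ (h '' Metric.ball 0 1))
    (h0 : h 0 = 0) (h1 : deriv h 0 = 1)
    (hbound : ∀ z ∈ Metric.ball (0 : ℂ) 1,
      ‖1 + z * deriv (deriv h) z / deriv h z‖ ≤ (1 + (1 - 2*α)*‖z‖) / (1 - ‖z‖)) :
    Set.InjOn (fun z : ℂ => h z + ((1 - ‖z‖^2 : ℝ) : ℂ) * (1/2 : ℂ) * z * deriv h z)
      (Metric.ball 0 1) := by
  set u : ℂ → ℂ := fun z : ℂ => h z + ((1 - ‖z‖^2 : ℝ) : ℂ) * (1/2 : ℂ) * z * deriv h z with hudef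
  intro z₁ hz₁ z₂ hz₂ huu
  by_contra hne12
  have hu : u z₁ = u z₂ := huu
  have hder := deriv_ne_zero hα1 hd h1 hbound
  have hreB := reB_nonneg hd hinj hconv hder
  set g := Function.invFunOn h (Metric.ball 0 1) with hgdef
  set δ : ℂ := h z₁ - h z₂ with hδdef
  have hδ0 : δ ≠ 0 := sub_ne_zero.mpr (fun he => hne12 (hinj hz₁ hz₂ he))
  have hΩopen : IsOpen (h '' Metric.ball 0 1) :=
    isOpen_image_of hd hder (subset_refl _) isOpen_ball
  set w : ℝ → ℂ := fun t => h z₂ + (t:ℂ) * δ with hwdef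
  have hw0 : w 0 = h z₂ := by rw [hwdef]; simp
  have hw1 : w 1 = h z₁ := by rw [hwdef]; simp [hδdef]
  -- a slightly enlarged interval mapping into Ω
  obtain ⟨ε, hε0, hεsub⟩ : ∃ ε > 0, ∀ t ∈ Ioo (-ε) (1+ε), w t ∈ h '' Metric.ball 0 1 := by
    obtain ⟨ρ₂, hρ₂0, hρ₂⟩ := Metric.isOpen_iff.mp hΩopen (h z₂) ⟨z₂, hz₂, rfl⟩
    obtain ⟨ρ₁, hρ₁0, hρ₁⟩ := Metric.isOpen_iff.mp hΩopen (h z₁) ⟨z₁, hz₁, rfl⟩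
    refine ⟨min (ρ₁/(‖δ‖+1)) (ρ₂/(‖δ‖+1)), by positivity, ?_⟩
    set ε := min (ρ₁/(‖δ‖+1)) (ρ₂/(‖δ‖+1)) with hεdef
    have hε1 : ε ≤ ρ₁/(‖δ‖+1) := min_le_left _ _
    have hε2 : ε ≤ ρ₂/(‖δ‖+1) := min_le_right _ _
    have hδ1 : (0:ℝ) < ‖δ‖ + 1 := by positivity
    intro t ht
    rcases lt_or_ge t 0 with ht0 | ht0
    · apply hρ₂
      rw [mem_ball, dist_eq_norm]
      have harg : w t - h z₂ = (t:ℂ) * δ := by rw [hwdef]; ring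
      rw [harg, norm_mul, Complex.norm_real, Real.norm_eq_abs]
      have h2 : |t| < ρ₂/(‖δ‖+1) := by
        rw [abs_of_neg ht0]
        have := ht.1
        have : -t < ε := by linarith
        linarith
      have h3 : |t| * ‖δ‖ ≤ |t| * (‖δ‖+1) := by
        have := abs_nonneg t
        nlinarith
      have h4 : |t| * (‖δ‖+1) < ρ₂ := by
        rw [lt_div_iff₀ hδ1] at h2
        nlinarith [abs_nonneg t, h2]
      linarith
    · rcases le_or_gt t 1 with ht1 | ht1
      · have hmem := hconv (⟨z₂, hz₂, rfl⟩ : h z₂ ∈ h '' Metric.ball 0 1)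
          (⟨z₁, hz₁, rfl⟩ : h z₁ ∈ h '' Metric.ball 0 1)
          (by linarith : (0:ℝ) ≤ 1 - t) (ht0 : (0:ℝ) ≤ t) (by ring)
        have harg : (1-t) • (h z₂) + t • (h z₁) = w t := by
          rw [Complex.real_smul, Complex.real_smul, hwdef, hδdef]
          push_cast
          ring
        rwa [harg] at hmem
      · apply hρ₁
        rw [mem_ball, dist_eq_norm]
        have harg : w t - h z₁ = ((t-1:ℝ):ℂ) * δ := by
          rw [hwdef, hδdef]; push_cast; ring
        rw [harg, norm_mul, Complex.norm_real, Real.norm_eq_abs]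
        have h2 : |t-1| < ρ₁/(‖δ‖+1) := by
          rw [abs_of_pos (by linarith : (0:ℝ) < t - 1)]
          have := ht.2
          linarith
        rw [lt_div_iff₀ hδ1] at h2
        nlinarith [abs_nonneg (t-1), norm_nonneg δ]
  set J := Ioo (-ε) (1+ε) with hJdef
  have hJopen : IsOpen J := isOpen_Ioo
  set z : ℝ → ℂ := fun t => g (w t) with hzdef
  have hzD : ∀ t ∈ J, z t ∈ Metric.ball (0:ℂ) 1 := fun t ht => g_mem (hεsub t ht)
  have hwz : ∀ t ∈ J, h (z t) = w t := fun t ht => g_right (hεsub t ht)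
  -- the real function to be shown strictly monotone
  set E : ℝ → ℝ := fun s => ((starRingEnd ℂ) δ * (h (z s) +
      ((1 - ((z s) * (starRingEnd ℂ) (z s)).re : ℝ) : ℂ) * (1/2 : ℂ) * z s * deriv h (z s))).re
    with hEdef
  -- pointwise identity between E and conj δ * u ∘ z
  have hE_u : ∀ s, E s = ((starRingEnd ℂ) δ * u (z s)).re := by
    intro s
    have hv : ∀ v : ℂ, ((1 - ‖v‖^2 : ℝ) : ℂ) = ((1 - (v * (starRingEnd ℂ) v).re : ℝ) : ℂ) := by
      intro v
      congr 1
      rw [Complex.mul_conj, Complex.ofReal_re, Complex.normSq_eq_norm_sq]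
    rw [hEdef, hudef]
    simp only [hv]
  -- derivative of E with a positive value, at each t ∈ J
  have hEkey : ∀ t ∈ J, ∃ e : ℝ, HasDerivAt E e t ∧ 0 < e := by
    intro t ht
    set zt := z t with hztdef
    have hztD : zt ∈ Metric.ball (0:ℂ) 1 := hzD t ht
    set d := deriv h zt with hddef
    set dd := deriv (deriv h) zt with hdddef
    have hd0 : d ≠ 0 := hder zt hztD
    have hwt : h zt = w t := hwz t ht
    -- derivative of w
    have hw' : HasDerivAt w δ t := by
      have ha : HasDerivAt (fun s : ℝ => ((s:ℝ):ℂ)) 1 t := by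
        simpa using ofReal_comp (hasDerivAt_id t)
      have hb := (ha.mul_const δ).const_add (h z₂)
      rw [one_mul] at hb
      exact hb
    -- derivative of z
    have hgd : HasDerivAt g d⁻¹ (w t) := by
      have := g_hasDeriv hd hinj hder hztD
      rwa [hwt] at this
    have hz' : HasDerivAt z (δ * d⁻¹) t := comp_real hgd hw'
    set zdot := δ * d⁻¹ with hzdot
    -- derivatives of the building blocks
    have hh' : HasDerivAt (fun s => h (z s)) (zdot * d) t :=
      comp_real ((hasStrictDeriv hd hztD).hasDerivAt) hz'
    have hdh : HasDerivAt (fun s => deriv h (z s)) (zdot * dd) t := by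
      have hdanalytic : HasDerivAt (deriv h) dd zt := by
        have := (((hd.analyticOnNhd isOpen_ball).deriv) zt hztD).differentiableAt
        exact this.hasDerivAt
      exact comp_real hdanalytic hz'
    have hconj' : HasDerivAt (fun s => (starRingEnd ℂ) (z s)) ((starRingEnd ℂ) zdot) t :=
      conj_comp hz'
    have hnsq : HasDerivAt (fun s => (1 - ((z s) * (starRingEnd ℂ) (z s)).re : ℝ))
        (-((zdot * (starRingEnd ℂ) zt + zt * (starRingEnd ℂ) zdot).re)) t := by
      have hmul := hz'.mul hconj'
      have hre := re_comp hmul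
      have := hre.const_sub 1
      exact this
    set Pr : ℝ := 1 - (zt * (starRingEnd ℂ) zt).re with hPr
    set Qr : ℝ := -((zdot * (starRingEnd ℂ) zt + zt * (starRingEnd ℂ) zdot).re) with hQr
    have hP : HasDerivAt (fun s => (((1 - ((z s) * (starRingEnd ℂ) (z s)).re : ℝ)) : ℂ))
        ((Qr : ℝ) : ℂ) t := ofReal_comp hnsq
    -- assemble the derivative of E
    set P : ℝ → ℂ := fun s => (((1 - ((z s) * (starRingEnd ℂ) (z s)).re : ℝ)) : ℂ) with hPdef
    have hPd : HasDerivAt P ((Qr : ℝ) : ℂ) t := hP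
    have hEc := re_comp ((hh'.add (((hPd.mul_const (1/2:ℂ)).mul hz').mul hdh)).const_mul
      ((starRingEnd ℂ) δ))
    refine ⟨_, hEc, ?_⟩
    show 0 < ((starRingEnd ℂ) δ * (zdot * d +
        ((((Qr:ℝ):ℂ) * (1/2) * zt + ((Pr:ℝ):ℂ) * (1/2) * zdot) * d
          + ((Pr:ℝ):ℂ) * (1/2) * zt * (zdot * dd)))).re
    -- canonical real quantities
    set X : ℝ := (zt * (starRingEnd ℂ) zdot).re with hX
    have hc : (zdot * (starRingEnd ℂ) zt).re = X := by
      rw [hX]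
      have hconjeq : zdot * (starRingEnd ℂ) zt
          = (starRingEnd ℂ) (zt * (starRingEnd ℂ) zdot) := by
        rw [map_mul, Complex.conj_conj]; ring
      rw [hconjeq, Complex.conj_re]
    have hQrX : Qr = -(2*X) := by
      rw [hQr, Complex.add_re, hc, hX]; ring
    have hcast1 : ((Pr:ℝ):ℂ) = 1 - zt * (starRingEnd ℂ) zt := by
      rw [hPr, Complex.mul_conj, Complex.ofReal_re]
      norm_cast
    have hcastQ : ((Qr:ℝ):ℂ)
        = -(zdot * (starRingEnd ℂ) zt + zt * (starRingEnd ℂ) zdot) := by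
      rw [hQr]
      push_cast
      congr 1
      have hsc : (starRingEnd ℂ) (zdot * (starRingEnd ℂ) zt + zt * (starRingEnd ℂ) zdot)
          = zdot * (starRingEnd ℂ) zt + zt * (starRingEnd ℂ) zdot := by
        simp only [map_add, map_mul, Complex.conj_conj]
        ring
      exact Complex.conj_eq_iff_re.mp hsc
    have hzd : zdot * d = δ := by
      rw [hzdot, mul_assoc, inv_mul_cancel₀ hd0, mul_one]
    -- the key complex identity
    have hkeyC : (starRingEnd ℂ) δ * (zdot * d +
        ((((Qr:ℝ):ℂ) * (1/2) * zt + ((Pr:ℝ):ℂ) * (1/2) * zdot) * d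
          + ((Pr:ℝ):ℂ) * (1/2) * zt * (zdot * dd)))
        = ((Complex.normSq δ : ℝ) : ℂ)
          + ((Qr/2 * Complex.normSq d : ℝ) : ℂ) * (zt * (starRingEnd ℂ) zdot)
          + ((Pr/2 * Complex.normSq δ : ℝ) : ℂ) * (1 + zt * dd / d) := by
      have hconjδ : (starRingEnd ℂ) δ = (starRingEnd ℂ) zdot * (starRingEnd ℂ) d := by
        rw [← hzd, map_mul]
      push_cast
      rw [hcastQ, hcast1, ← Complex.mul_conj δ, ← Complex.mul_conj d, hconjδ, ← hzd]
      field_simp [hd0]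
      ring
    rw [hkeyC]
    have hre : (((Complex.normSq δ : ℝ) : ℂ)
          + ((Qr/2 * Complex.normSq d : ℝ) : ℂ) * (zt * (starRingEnd ℂ) zdot)
          + ((Pr/2 * Complex.normSq δ : ℝ) : ℂ) * (1 + zt * dd / d)).re
        = Complex.normSq δ + (Qr/2 * Complex.normSq d) * X
          + (Pr/2 * Complex.normSq δ) * (1 + zt * dd / d).re := by
      rw [Complex.add_re, Complex.add_re, Complex.ofReal_re,
        Complex.re_ofReal_mul, Complex.re_ofReal_mul, hX]
    rw [hre]
    -- bounds
    have hBnn : 0 ≤ (1 + zt * dd / d).re := hreB zt hztD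
    have hXsq : X^2 ≤ Complex.normSq zt * Complex.normSq zdot := by
      have h1 : |X| ≤ ‖zt * (starRingEnd ℂ) zdot‖ := by
        rw [hX]; exact Complex.abs_re_le_norm _
      have h2 : X^2 ≤ (‖zt * (starRingEnd ℂ) zdot‖)^2 := by
        rw [← _root_.sq_abs X]
        exact pow_le_pow_left₀ (abs_nonneg X) h1 2
      calc X^2 ≤ (‖zt * (starRingEnd ℂ) zdot‖)^2 := h2
        _ = Complex.normSq (zt * (starRingEnd ℂ) zdot) := Complex.sq_norm _
        _ = Complex.normSq zt * Complex.normSq zdot := by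
            rw [map_mul, Complex.normSq_conj]
    have hnsd : Complex.normSq zdot * Complex.normSq d = Complex.normSq δ := by
      rw [← map_mul, hzd]
    have hzt1 : Complex.normSq zt < 1 := by
      have := mem_ball_zero_iff.mp hztD
      rw [Complex.normSq_eq_norm_sq]
      nlinarith [norm_nonneg zt]
    have hδpos : 0 < Complex.normSq δ := Complex.normSq_pos.mpr hδ0
    have hPrnn : 0 ≤ Pr := by
      rw [hPr, Complex.mul_conj, Complex.ofReal_re]
      exact sub_nonneg.mpr hzt1.le
    have hQterm : -(Complex.normSq zt * Complex.normSq δ) ≤ (Qr/2 * Complex.normSq d) * X := by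
      have hd2 : 0 ≤ Complex.normSq d := Complex.normSq_nonneg d
      have hstep : X^2 * Complex.normSq d ≤ Complex.normSq zt * Complex.normSq δ := by
        calc X^2 * Complex.normSq d
            ≤ (Complex.normSq zt * Complex.normSq zdot) * Complex.normSq d :=
              mul_le_mul_of_nonneg_right hXsq hd2
          _ = Complex.normSq zt * Complex.normSq δ := by rw [mul_assoc, hnsd]
      have hrw : (Qr/2 * Complex.normSq d) * X = -(X^2 * Complex.normSq d) := by
        rw [hQrX]; ring
      rw [hrw]
      exact neg_le_neg hstep
    have hthird : 0 ≤ (Pr/2 * Complex.normSq δ) * (1 + zt * dd / d).re := by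
      apply mul_nonneg _ hBnn
      positivity
    exact final_ineq hδpos hzt1 hQterm hthird
  -- strict monotonicity of E on [0,1]
  have hsubJ : Icc (0:ℝ) 1 ⊆ J := by
    intro x hx
    rw [hJdef]
    exact ⟨by linarith [hx.1], by linarith [hx.2]⟩
  have hmono : StrictMonoOn E (Icc 0 1) := by
    refine strictMonoOn_of_deriv_pos (convex_Icc 0 1) ?_ ?_
    · intro x hx
      obtain ⟨e, he, _⟩ := hEkey x (hsubJ hx)
      exact he.continuousAt.continuousWithinAt
    · intro x hx
      rw [interior_Icc] at hx
      obtain ⟨e, he, hepos⟩ := hEkey x (hsubJ ⟨hx.1.le, hx.2.le⟩)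
      rw [he.deriv]
      exact hepos
  have hlt : E 0 < E 1 :=
    hmono (left_mem_Icc.mpr zero_le_one) (right_mem_Icc.mpr zero_le_one) zero_lt_one
  have hz0 : z 0 = z₂ := by
    show g (w 0) = z₂
    rw [hw0, hgdef]
    exact g_left hinj hz₂
  have hz1 : z 1 = z₁ := by
    show g (w 1) = z₁
    rw [hw1, hgdef]
    exact g_left hinj hz₁
  have hE0 : E 0 = ((starRingEnd ℂ) δ * u z₂).re := by rw [hE_u 0, hz0]
  have hE1 : E 1 = ((starRingEnd ℂ) δ * u z₁).re := by rw [hE_u 1, hz1]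
  rw [hE0, hE1, hu] at hlt
  exact lt_irrefl _ hlt


end
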